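/- Let, for each ε > 0, φ_ε := η_{ε/2} * ψ_ε be the convolution of the rescaled standard mollifier η_{ε/2} with ψ_ε(t) := max(min(t, 1+ε), −ε). Then: (i) |φ_ε(t)| ≤ 1+ε for all t ∈ ℝ and ε > 0, and for each t ∈ ℝ, φ_ε(t) → min(max(t,0), 1) as ε → 0+; (ii) |φ_ε'(t)| ≤ 1 for all t ∈ ℝ and ε > 0, and for each t ∈ ℝ, φ_ε'(t) → 1_{[0,1]}(t) as ε → 0+, where 1_{[0,1]} is the indicator function of the interval [0,1]. -/

import Mathlib

open Filter Set
open scoped Topology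
open MeasureTheory

noncomputable section

/-- The unnormalized standard bump function on `ℝ`. -/
def stdBump (t : ℝ) : ℝ := if |t| < 1 then Real.exp (1 / (t ^ 2 - 1)) else 0

lemma stdBump_eq (t : ℝ) : stdBump t = expNegInvGlue (1 - t ^ 2) := by
  unfold stdBump expNegInvGlue
  rcases lt_or_ge (|t|) 1 with h | h
  · have h2 : (0:ℝ) < 1 - t ^ 2 := by
      have := abs_lt.1 h; nlinarith
    rw [if_pos h, if_neg (not_le.2 h2)]
    congr 1
    rw [one_div, neg_inv, neg_sub]
  · have h2 : 1 - t ^ 2 ≤ 0 := by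
      have := sq_abs t; nlinarith
    rw [if_neg (not_lt.2 h), if_pos h2]

lemma stdBump_cont : Continuous stdBump := by
  have : stdBump = fun t => expNegInvGlue (1 - t ^ 2) := funext stdBump_eq
  rw [this]
  exact (expNegInvGlue.contDiff (n := 0)).continuous.comp (by continuity)

lemma stdBump_nonneg (t : ℝ) : 0 ≤ stdBump t := by
  rw [stdBump_eq]; exact expNegInvGlue.nonneg _

lemma stdBump_zero {t : ℝ} (h : 1 ≤ |t|) : stdBump t = 0 := by
  simp [stdBump, not_lt.2 h]

lemma stdBump_hcs : HasCompactSupport stdBump := by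
  refine HasCompactSupport.intro (isCompact_Icc (a := (-1:ℝ)) (b := 1)) fun t ht => ?_
  apply stdBump_zero
  by_contra h
  exact ht (mem_Icc.2 (abs_le.1 (le_of_lt (not_le.1 h))))

lemma stdBump_integrable : Integrable stdBump :=
  stdBump_cont.integrable_of_hasCompactSupport stdBump_hcs

lemma stdBump_integral_pos : 0 < ∫ s, stdBump s := by
  rw [integral_pos_iff_support_of_nonneg stdBump_nonneg stdBump_integrable]
  have hsub : Ioo (-1:ℝ) 1 ⊆ Function.support stdBump := by
    intro t ht
    have h1 : |t| < 1 := abs_lt.2 ⟨ht.1, ht.2⟩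
    simp only [Function.mem_support, stdBump, if_pos h1]
    exact (Real.exp_pos _).ne'
  calc (0:ENNReal) < volume (Ioo (-1:ℝ) 1) := by simp [Real.volume_Ioo]
    _ ≤ volume (Function.support stdBump) := measure_mono hsub

lemma stdBump_even (t : ℝ) : stdBump (-t) = stdBump t := by
  simp [stdBump, abs_neg, neg_pow, neg_sq]

/-- The standard mollifier `η` on `ℝ`, normalized so that `∫ η = 1`. -/
def stdMollifier (t : ℝ) : ℝ := (∫ s, stdBump s)⁻¹ * stdBump t

lemma stdMollifier_nonneg (t : ℝ) : 0 ≤ stdMollifier t :=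
  mul_nonneg (inv_nonneg.2 stdBump_integral_pos.le) (stdBump_nonneg t)

lemma stdMollifier_cont : Continuous stdMollifier :=
  continuous_const.mul stdBump_cont

lemma stdMollifier_zero {t : ℝ} (h : 1 ≤ |t|) : stdMollifier t = 0 := by
  simp [stdMollifier, stdBump_zero h]

lemma stdMollifier_even (t : ℝ) : stdMollifier (-t) = stdMollifier t := by
  simp [stdMollifier, stdBump_even]

lemma stdMollifier_hcs : HasCompactSupport stdMollifier := by
  refine HasCompactSupport.intro (isCompact_Icc (a := (-1:ℝ)) (b := 1)) fun t ht => ?_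
  apply stdMollifier_zero
  by_contra h
  exact ht (mem_Icc.2 (abs_le.1 (le_of_lt (not_le.1 h))))

lemma stdMollifier_integrable : Integrable stdMollifier :=
  stdMollifier_cont.integrable_of_hasCompactSupport stdMollifier_hcs

lemma stdMollifier_integral : ∫ s, stdMollifier s = 1 := by
  unfold stdMollifier
  rw [MeasureTheory.integral_const_mul, inv_mul_cancel₀ stdBump_integral_pos.ne']

/-- The rescaled mollifier `η_δ(t) = δ⁻¹ η(t/δ)`. -/
def mollifierScaled (δ t : ℝ) : ℝ := (1 / δ) * stdMollifier (t / δ)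

variable {δ ε a b t M : ℝ}

lemma moll_nonneg (hδ : 0 < δ) (t : ℝ) : 0 ≤ mollifierScaled δ t :=
  mul_nonneg (by positivity) (stdMollifier_nonneg _)

lemma moll_cont (hδ : 0 < δ) : Continuous (mollifierScaled δ) :=
  continuous_const.mul (stdMollifier_cont.comp (continuous_id.div_const δ))

lemma moll_zero (hδ : 0 < δ) {t : ℝ} (h : δ ≤ |t|) : mollifierScaled δ t = 0 := by
  have : 1 ≤ |t / δ| := by
    rw [abs_div, abs_of_pos hδ, le_div_iff₀ hδ, one_mul]
    exact h
  simp [mollifierScaled, stdMollifier_zero this]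

lemma moll_even (hδ : 0 < δ) (t : ℝ) : mollifierScaled δ (-t) = mollifierScaled δ t := by
  simp [mollifierScaled, neg_div, stdMollifier_even]

lemma moll_hcs (hδ : 0 < δ) : HasCompactSupport (mollifierScaled δ) := by
  refine HasCompactSupport.intro (isCompact_Icc (a := -δ) (b := δ)) fun t ht => ?_
  apply moll_zero hδ
  by_contra h
  exact ht (mem_Icc.2 (abs_le.1 (le_of_lt (not_le.1 h))))

lemma moll_integrable (hδ : 0 < δ) : Integrable (mollifierScaled δ) :=
  (moll_cont hδ).integrable_of_hasCompactSupport (moll_hcs hδ)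

lemma moll_integral (hδ : 0 < δ) : ∫ s, mollifierScaled δ s = 1 := by
  unfold mollifierScaled
  rw [MeasureTheory.integral_const_mul, MeasureTheory.Measure.integral_comp_div stdMollifier δ,
    stdMollifier_integral, abs_of_pos hδ]
  simp [one_div, inv_mul_cancel₀ hδ.ne']

lemma moll_id_integrable (hδ : 0 < δ) : Integrable (fun s => s * mollifierScaled δ s) :=
  (continuous_id.mul (moll_cont hδ)).integrable_of_hasCompactSupport
    ((moll_hcs hδ).mul_left)

lemma moll_id_integral (hδ : 0 < δ) : ∫ s, s * mollifierScaled δ s = 0 := by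
  have h1 := integral_neg_eq_self (fun s => s * mollifierScaled δ s) volume
  have h2 : (fun s => (-s) * mollifierScaled δ (-s))
      = fun s => -(s * mollifierScaled δ s) := funext fun s => by
    rw [moll_even hδ]; ring
  simp only [h2, integral_neg] at h1
  linarith

/-- The truncation `ψ_ε(t) = (t ∧ (1+ε)) ∨ (−ε)`. -/
def truncFn (ε t : ℝ) : ℝ := max (min t (1 + ε)) (-ε)

/-- `φ_ε = η_{ε/2} * ψ_ε` (convolution). -/
def phiEps (ε t : ℝ) : ℝ := ∫ s, mollifierScaled (ε / 2) s * truncFn ε (t - s)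

lemma truncFn_cont : Continuous (truncFn ε) :=
  (continuous_id.min continuous_const).max continuous_const

lemma conv_integrable (hδ : 0 < δ) {g : ℝ → ℝ} (hg : Continuous g) (t : ℝ) :
    Integrable (fun s => mollifierScaled δ s * g (t - s)) :=
  ((moll_cont hδ).mul
    (hg.comp (continuous_const.sub continuous_id))).integrable_of_hasCompactSupport
    ((moll_hcs hδ).mul_right)

lemma conv_bound (hδ : 0 < δ) {g : ℝ → ℝ} (hg : Continuous g) (hM : ∀ u, |g u| ≤ M)
    (t : ℝ) : |∫ s, mollifierScaled δ s * g (t - s)| ≤ M := by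
  have hi := conv_integrable hδ hg t
  have h0 : |∫ s, mollifierScaled δ s * g (t - s)|
      ≤ ∫ s, |mollifierScaled δ s * g (t - s)| := by
    simpa only [Real.norm_eq_abs] using
      MeasureTheory.norm_integral_le_integral_norm (μ := volume)
        (fun s => mollifierScaled δ s * g (t - s))
  refine h0.trans ?_
  have h1 : ∫ s, |mollifierScaled δ s * g (t - s)| ≤ ∫ s, M * mollifierScaled δ s := by
    refine integral_mono hi.abs ((moll_integrable hδ).const_mul M) fun s => ?_
    rw [abs_mul, abs_of_nonneg (moll_nonneg hδ s), mul_comm M]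
    exact mul_le_mul_of_nonneg_left (hM _) (moll_nonneg hδ s)
  refine h1.trans_eq ?_
  rw [MeasureTheory.integral_const_mul, moll_integral hδ, mul_one]

lemma conv_affine (hδ : 0 < δ) {g : ℝ → ℝ} (t : ℝ)
    (hg : ∀ u, |u - t| ≤ δ → g u = a * u + b) :
    ∫ s, mollifierScaled δ s * g (t - s) = a * t + b := by
  have hfe : (fun s => mollifierScaled δ s * g (t - s))
      = fun s => (a * t + b) * mollifierScaled δ s - a * (s * mollifierScaled δ s) := by
    funext s
    rcases le_or_gt δ (|s|) with h | h
    · rw [moll_zero hδ h]; ring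
    · rw [hg (t - s) (by rw [sub_sub_cancel_left, abs_neg]; exact h.le)]; ring
  rw [hfe, integral_sub ((moll_integrable hδ).const_mul _)
      ((moll_id_integrable hδ).const_mul a),
    MeasureTheory.integral_const_mul, MeasureTheory.integral_const_mul, moll_integral hδ,
    moll_id_integral hδ, mul_one, mul_zero, sub_zero]

lemma truncFn_abs_le (hε : 0 < ε) (u : ℝ) : |truncFn ε u| ≤ 1 + ε := by
  rw [abs_le]
  constructor
  · refine le_trans (by linarith) (le_max_right _ _)
  · exact max_le (le_trans (min_le_right _ _) le_rfl) (by linarith)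

lemma truncFn_lip (ε x y : ℝ) : |truncFn ε x - truncFn ε y| ≤ |x - y| := by
  calc |truncFn ε x - truncFn ε y|
      ≤ |min x (1 + ε) - min y (1 + ε)| := abs_max_sub_max_le_abs _ _ _
    _ ≤ max |x - y| |(1 + ε) - (1 + ε)| := abs_min_sub_min_le_max _ _ _ _
    _ = |x - y| := by simp

lemma phi_lip (hε : 0 < ε) (x y : ℝ) : |phiEps ε x - phiEps ε y| ≤ |x - y| := by
  have hδ : 0 < ε / 2 := by linarith
  unfold phiEps
  rw [← integral_sub (conv_integrable hδ truncFn_cont x) (conv_integrable hδ truncFn_cont y)]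
  have h0 : |∫ s, (mollifierScaled (ε/2) s * truncFn ε (x - s)
        - mollifierScaled (ε/2) s * truncFn ε (y - s))|
      ≤ ∫ s, |mollifierScaled (ε/2) s * truncFn ε (x - s)
        - mollifierScaled (ε/2) s * truncFn ε (y - s)| := by
    simpa only [Real.norm_eq_abs] using
      MeasureTheory.norm_integral_le_integral_norm (μ := volume)
        (fun s => mollifierScaled (ε/2) s * truncFn ε (x - s)
          - mollifierScaled (ε/2) s * truncFn ε (y - s))
  refine h0.trans ?_
  have h1 : ∫ s, |mollifierScaled (ε/2) s * truncFn ε (x - s)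
        - mollifierScaled (ε/2) s * truncFn ε (y - s)|
      ≤ ∫ s, |x - y| * mollifierScaled (ε/2) s := by
    refine integral_mono
      (((conv_integrable hδ truncFn_cont x).sub (conv_integrable hδ truncFn_cont y)).abs)
      ((moll_integrable hδ).const_mul _) fun s => ?_
    rw [← mul_sub, abs_mul, abs_of_nonneg (moll_nonneg hδ s), mul_comm (|x - y|)]
    refine mul_le_mul_of_nonneg_left ?_ (moll_nonneg hδ s)
    have := truncFn_lip ε (x - s) (y - s)
    simpa [sub_sub_sub_cancel_right] using this
  refine h1.trans_eq ?_
  rw [MeasureTheory.integral_const_mul, moll_integral hδ, mul_one]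

lemma phi_id (hε : 0 < ε) (h1 : -(ε/2) ≤ t) (h2 : t ≤ 1 + ε/2) : phiEps ε t = t := by
  have := conv_affine (a := 1) (b := 0) (half_pos hε) (g := truncFn ε) t ?_
  · simpa [phiEps] using this
  · intro u hu
    have hu' := abs_le.1 hu
    unfold truncFn
    rw [min_eq_left (by linarith), max_eq_left (by linarith)]
    ring

lemma phi_lo (hε : 0 < ε) (h : t + ε/2 ≤ -ε) : phiEps ε t = -ε := by
  have := conv_affine (a := 0) (b := -ε) (half_pos hε) (g := truncFn ε) t ?_
  · simpa [phiEps] using this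
  · intro u hu
    have hu' := abs_le.1 hu
    unfold truncFn
    rw [min_eq_left (by linarith), max_eq_right (by linarith)]
    ring

lemma phi_hi (hε : 0 < ε) (h : 1 + ε ≤ t - ε/2) : phiEps ε t = 1 + ε := by
  have := conv_affine (a := 0) (b := 1 + ε) (half_pos hε) (g := truncFn ε) t ?_
  · simpa [phiEps] using this
  · intro u hu
    have hu' := abs_le.1 hu
    unfold truncFn
    rw [min_eq_right (by linarith), max_eq_left (by linarith)]
    ring

lemma deriv_eq_of_eventually {f : ℝ → ℝ} (h : ∀ᶠ x in 𝓝 t, f x = a * x + b) :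
    deriv f t = a := by
  rw [Filter.EventuallyEq.deriv_eq (h : f =ᶠ[𝓝 t] fun x => a * x + b)]
  simpa using (((hasDerivAt_id t).const_mul a).add_const b).deriv

lemma phi_bound (hε : 0 < ε) (t : ℝ) : |phiEps ε t| ≤ 1 + ε :=
  conv_bound (half_pos hε) truncFn_cont (truncFn_abs_le hε) t

lemma phi_deriv_bound (hε : 0 < ε) (t : ℝ) : |deriv (phiEps ε) t| ≤ 1 := by
  by_cases h : DifferentiableAt ℝ (phiEps ε) t
  · have hl : LipschitzWith 1 (phiEps ε) := LipschitzWith.of_dist_le_mul fun x y => by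
      rw [Real.dist_eq, Real.dist_eq, NNReal.coe_one, one_mul]
      exact phi_lip hε x y
    simpa [Real.norm_eq_abs] using h.hasDerivAt.le_of_lipschitz hl
  · rw [deriv_zero_of_not_differentiableAt h]; simp

lemma phi_deriv_id (hε : 0 < ε) (h1 : 0 ≤ t) (h2 : t ≤ 1) : deriv (phiEps ε) t = 1 := by
  refine deriv_eq_of_eventually (b := 0) ?_
  filter_upwards [Metric.ball_mem_nhds t (half_pos hε)] with x hx
  rw [Metric.mem_ball, Real.dist_eq] at hx
  have hx' := abs_lt.1 hx
  rw [phi_id hε (by linarith) (by linarith)]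
  ring

lemma phi_deriv_lo (hε : 0 < ε) (h : t < -(3*ε/2)) : deriv (phiEps ε) t = 0 := by
  refine deriv_eq_of_eventually (b := -ε) ?_
  filter_upwards [Metric.ball_mem_nhds t (show (0:ℝ) < -(3*ε/2) - t by linarith)] with x hx
  rw [Metric.mem_ball, Real.dist_eq] at hx
  have hx' := abs_lt.1 hx
  rw [phi_lo hε (by linarith)]
  ring

lemma phi_deriv_hi (hε : 0 < ε) (h : 1 + 3*ε/2 < t) : deriv (phiEps ε) t = 0 := by
  refine deriv_eq_of_eventually (b := 1 + ε) ?_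
  filter_upwards [Metric.ball_mem_nhds t (show (0:ℝ) < t - (1 + 3*ε/2) by linarith)] with x hx
  rw [Metric.mem_ball, Real.dist_eq] at hx
  have hx' := abs_lt.1 hx
  rw [phi_hi hε (by linarith)]
  ring

/-- Proposition `auxpropfir`: uniform bounds and pointwise limits of
`φ_ε` and `φ_ε'` as `ε → 0+`. -/
theorem phiEps_limits :
    (∀ ε : ℝ, 0 < ε → ∀ t : ℝ, |phiEps ε t| ≤ 1 + ε) ∧
    (∀ t : ℝ, Tendsto (fun ε => phiEps ε t) (𝓝[>] (0:ℝ)) (𝓝 (min (max t 0) 1))) ∧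
    (∀ ε : ℝ, 0 < ε → ∀ t : ℝ, |deriv (phiEps ε) t| ≤ 1) ∧
    (∀ t : ℝ, Tendsto (fun ε => deriv (phiEps ε) t) (𝓝[>] (0:ℝ))
      (𝓝 (indicator (Icc (0:ℝ) 1) (fun _ => (1:ℝ)) t))) := by
  refine ⟨fun ε hε t => phi_bound hε t, fun t => ?_, fun ε hε t => phi_deriv_bound hε t,
    fun t => ?_⟩
  · rcases lt_or_ge t 0 with h0 | h0
    · rw [show min (max t 0) 1 = 0 by rw [max_eq_right h0.le, min_eq_left zero_le_one]]
      have hten : Tendsto (fun ε : ℝ => -ε) (𝓝[>] (0:ℝ)) (𝓝 0) := by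
        simpa using (continuous_neg.tendsto (0:ℝ)).mono_left nhdsWithin_le_nhds
      refine hten.congr' ?_
      filter_upwards [self_mem_nhdsWithin,
        eventually_nhdsWithin_of_eventually_nhds
          (eventually_lt_nhds (show (0:ℝ) < -2*t/3 by linarith))] with ε hε1 hε2
      have hε := mem_Ioi.1 hε1
      exact (phi_lo hε (by linarith)).symm
    · rcases le_or_gt t 1 with h1 | h1
      · rw [show min (max t 0) 1 = t by rw [max_eq_left h0, min_eq_left h1]]
        refine tendsto_const_nhds.congr' ?_
        filter_upwards [self_mem_nhdsWithin] with ε hε1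
        have hε := mem_Ioi.1 hε1
        exact (phi_id hε (by linarith) (by linarith)).symm
      · rw [show min (max t 0) 1 = 1 by rw [max_eq_left (by linarith), min_eq_right h1.le]]
        have hten : Tendsto (fun ε : ℝ => 1 + ε) (𝓝[>] (0:ℝ)) (𝓝 1) := by
          simpa using
            ((continuous_add_left (1:ℝ)).tendsto (0:ℝ)).mono_left nhdsWithin_le_nhds
        refine hten.congr' ?_
        filter_upwards [self_mem_nhdsWithin,
          eventually_nhdsWithin_of_eventually_nhds
            (eventually_lt_nhds (show (0:ℝ) < 2*(t-1)/3 by linarith))] with ε hε1 hε2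
        have hε := mem_Ioi.1 hε1
        exact (phi_hi hε (by linarith)).symm
  · rcases lt_or_ge t 0 with h0 | h0
    · rw [indicator_of_notMem (fun h => absurd h.1 (not_le.2 h0))]
      refine tendsto_const_nhds.congr' ?_
      filter_upwards [self_mem_nhdsWithin,
        eventually_nhdsWithin_of_eventually_nhds
          (eventually_lt_nhds (show (0:ℝ) < -2*t/3 by linarith))] with ε hε1 hε2
      have hε := mem_Ioi.1 hε1
      exact (phi_deriv_lo hε (by linarith)).symm
    · rcases le_or_gt t 1 with h1 | h1
      · rw [indicator_of_mem (mem_Icc.2 ⟨h0, h1⟩)]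
        refine tendsto_const_nhds.congr' ?_
        filter_upwards [self_mem_nhdsWithin] with ε hε1
        exact (phi_deriv_id (mem_Ioi.1 hε1) h0 h1).symm
      · rw [indicator_of_notMem (fun h => absurd h.2 (not_le.2 h1))]
        refine tendsto_const_nhds.congr' ?_
        filter_upwards [self_mem_nhdsWithin,
          eventually_nhdsWithin_of_eventually_nhds
            (eventually_lt_nhds (show (0:ℝ) < 2*(t-1)/3 by linarith))] with ε hε1 hε2
        have hε := mem_Ioi.1 hε1
        exact (phi_deriv_hi hε (by linarith)).symm
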